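/- For a chainmail Γ, the exterior D(Γ) is an absolute connectivity lattice whose absolutely connected elements are exactly the singletons {x} for x ∈ Γ; consequently the poset of absolutely connected elements of D(Γ) is isomorphic to Γ. -/

import Mathlib

variable {α : Type*}

/-- A totally mail-disconnected set: no two distinct elements have a common lower bound. -/
def TMD [Preorder α] (S : Set α) : Prop :=
  ∀ a ∈ S, ∀ b ∈ S, a ≠ b → ¬∃ c, c ≤ a ∧ c ≤ b

/-- The exterior `D(Γ)`: the collection of totally mail-disconnected subsets of `Γ`. -/
def DExt (α : Type*) [Preorder α] := {S : Set α // TMD S}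

/-- The order on the exterior: `S₁ ≤ S₂` when each element of `S₁` is below some
element of `S₂`. -/
instance [PartialOrder α] : PartialOrder (DExt α) where
  le S T := ∀ a ∈ S.1, ∃ b ∈ T.1, a ≤ b
  le_refl S a ha := ⟨a, ha, le_refl a⟩
  le_trans S T U h1 h2 a ha := by
    obtain ⟨b, hb, hab⟩ := h1 a ha
    obtain ⟨c, hc, hbc⟩ := h2 b hb
    exact ⟨c, hc, le_trans hab hbc⟩
  le_antisymm S T h1 h2 := by
    apply Subtype.ext
    apply Set.eq_of_subset_of_subset
    · intro a ha
      obtain ⟨b, hb, hab⟩ := h1 a ha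
      obtain ⟨c, hc, hbc⟩ := h2 b hb
      have hac : a = c := by
        by_contra hne
        exact S.2 a ha c hc hne ⟨a, le_refl a, le_trans hab hbc⟩
      have hab' : a = b := le_antisymm hab (hac ▸ hbc)
      exact hab' ▸ hb
    · intro a ha
      obtain ⟨b, hb, hab⟩ := h2 a ha
      obtain ⟨c, hc, hbc⟩ := h1 b hb
      have hac : a = c := by
        by_contra hne
        exact T.2 a ha c hc hne ⟨a, le_refl a, le_trans hab hbc⟩
      have hab' : a = b := le_antisymm hab (hac ▸ hbc)
      exact hab' ▸ hb

/-- The bottom element of the exterior: the empty set. -/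
def extBot (α : Type*) [PartialOrder α] : DExt α :=
  ⟨∅, fun a ha => absurd ha (Set.notMem_empty a)⟩

/-- An absolutely connected element of the exterior: for every family `𝒮` of
nonzero elements, no two distinct of which have a common nonzero lower bound,
if `a` is below a least upper bound of `𝒮` then `a` is below a member of `𝒮`. -/
def AbsConnE [PartialOrder α] (a : DExt α) : Prop :=
  ∀ 𝒮 : Set (DExt α), (∀ s ∈ 𝒮, s ≠ extBot α) →
    (∀ s ∈ 𝒮, ∀ t ∈ 𝒮, s ≠ t → ¬∃ c : DExt α, c ≠ extBot α ∧ c ≤ s ∧ c ≤ t) →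
    ∀ j : DExt α, IsLUB 𝒮 j → a ≤ j → ∃ s ∈ 𝒮, a ≤ s

/-- The maximal absolutely connected elements of the exterior below `y`. -/
def CompsE [PartialOrder α] (y : DExt α) : Set (DExt α) :=
  {c | AbsConnE c ∧ c ≤ y ∧ ∀ d : DExt α, AbsConnE d → d ≤ y → c ≤ d → c = d}

section Helpers

variable [PartialOrder α]

lemma tmd_singleton (x : α) : TMD ({x} : Set α) := by
  intro a ha b hb hne
  rw [Set.mem_singleton_iff] at ha hb
  exact absurd (ha.trans hb.symm) hne

/-- Singleton element of the exterior. -/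
def sgl (x : α) : DExt α := ⟨{x}, tmd_singleton x⟩

lemma le_def' {S T : DExt α} : S ≤ T ↔ ∀ a ∈ S.1, ∃ b ∈ T.1, a ≤ b := Iff.rfl

lemma sgl_le_iff {x : α} {T : DExt α} : sgl x ≤ T ↔ ∃ b ∈ T.1, x ≤ b := by
  constructor
  · intro h; exact h x rfl
  · rintro ⟨b, hb, hxb⟩ a ha
    have ha' : a = x := ha
    subst ha'; exact ⟨b, hb, hxb⟩

lemma sgl_ne_bot (x : α) : sgl x ≠ extBot α := by
  intro h
  exact Set.singleton_ne_empty x (congrArg Subtype.val h)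

lemma union_tmd' (𝒮 : Set (DExt α)) (P : DExt α → Prop) (hP : ∀ c : α, P (sgl c))
    (hpair : ∀ s ∈ 𝒮, ∀ t ∈ 𝒮, s ≠ t → ¬∃ c : DExt α, P c ∧ c ≤ s ∧ c ≤ t) :
    TMD (⋃ s ∈ 𝒮, (s : DExt α).1) := by
  intro a ha b hb hne hc
  obtain ⟨c, hca, hcb⟩ := hc
  simp only [Set.mem_iUnion, exists_prop] at ha hb
  obtain ⟨s, hs, has⟩ := ha
  obtain ⟨t, ht, hbt⟩ := hb
  by_cases hst : s = t
  · subst hst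
    exact s.2 a has b hbt hne ⟨c, hca, hcb⟩
  · exact hpair s hs t ht hst ⟨sgl c, hP c,
      sgl_le_iff.mpr ⟨a, has, hca⟩, sgl_le_iff.mpr ⟨b, hbt, hcb⟩⟩

lemma isLUB_union (𝒮 : Set (DExt α)) (hT : TMD (⋃ s ∈ 𝒮, (s : DExt α).1)) :
    IsLUB 𝒮 ⟨⋃ s ∈ 𝒮, (s : DExt α).1, hT⟩ := by
  constructor
  · intro s hs a ha
    exact ⟨a, by simp only [Set.mem_iUnion, exists_prop]; exact ⟨s, hs, ha⟩, le_refl a⟩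
  · intro u hu a ha
    simp only [Set.mem_iUnion, exists_prop] at ha
    obtain ⟨s, hs, has⟩ := ha
    exact hu hs a has

lemma absconn_sgl (x : α) : AbsConnE (sgl x) := by
  intro 𝒮 _ hpair j hj hle
  have hT := union_tmd' 𝒮 (fun c => c ≠ extBot α) sgl_ne_bot hpair
  have hje : j = ⟨_, hT⟩ := hj.unique (isLUB_union 𝒮 hT)
  rw [hje] at hle
  obtain ⟨b, hb, hxb⟩ := sgl_le_iff.mp hle
  simp only [Set.mem_iUnion, exists_prop] at hb
  obtain ⟨s, hs, hbs⟩ := hb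
  exact ⟨s, hs, sgl_le_iff.mpr ⟨b, hbs, hxb⟩⟩

lemma isLUB_sgls (a : DExt α) : IsLUB {s | ∃ x ∈ a.1, s = sgl x} a := by
  constructor
  · rintro s ⟨x, hx, rfl⟩
    exact sgl_le_iff.mpr ⟨x, hx, le_refl x⟩
  · intro u hu y hy
    exact sgl_le_iff.mp (hu ⟨y, hy, rfl⟩)

lemma absconn_iff (a : DExt α) : AbsConnE a ↔ ∃ x, a.1 = {x} := by
  constructor
  · intro h
    have hne : a ≠ extBot α := by
      intro hbot
      have hlub : IsLUB (∅ : Set (DExt α)) (extBot α) := by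
        constructor
        · rintro s ⟨⟩
        · intro u _ y hy; exact absurd hy (Set.notMem_empty y)
      obtain ⟨s, hs, _⟩ := h ∅ (by simp) (by simp) (extBot α) hlub (le_of_eq hbot)
      exact hs
    set 𝒮 := {s | ∃ x ∈ a.1, s = sgl x} with h𝒮
    have h1 : ∀ s ∈ 𝒮, s ≠ extBot α := by rintro s ⟨x, hx, rfl⟩; exact sgl_ne_bot x
    have h2 : ∀ s ∈ 𝒮, ∀ t ∈ 𝒮, s ≠ t →
        ¬∃ c : DExt α, c ≠ extBot α ∧ c ≤ s ∧ c ≤ t := by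
      rintro s ⟨x, hx, rfl⟩ t ⟨y, hy, rfl⟩ hst ⟨c, hcne, hcs, hct⟩
      have hxy : x ≠ y := fun hxy => hst (by rw [hxy])
      obtain ⟨u, hu⟩ : c.1.Nonempty := by
        rw [Set.nonempty_iff_ne_empty]
        exact fun hcE => hcne (Subtype.ext hcE)
      obtain ⟨b1, hb1, hub1⟩ := hcs u hu
      obtain ⟨b2, hb2, hub2⟩ := hct u hu
      have hb1' : b1 = x := hb1
      have hb2' : b2 = y := hb2
      exact a.2 x hx y hy hxy ⟨u, hb1' ▸ hub1, hb2' ▸ hub2⟩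
    obtain ⟨s, ⟨x, hx, rfl⟩, hle⟩ := h 𝒮 h1 h2 a (isLUB_sgls a) (le_refl a)
    refine ⟨x, subset_antisymm ?_ ?_⟩
    · intro y hy
      obtain ⟨b, hb, hyb⟩ := hle y hy
      have hb' : b = x := hb
      subst hb'
      rw [Set.mem_singleton_iff]
      by_contra hne'
      exact a.2 y hy b hx hne' ⟨y, le_refl y, hyb⟩
    · intro y hy
      rw [Set.mem_singleton_iff] at hy
      exact hy ▸ hx
  · rintro ⟨x, hx⟩
    have : a = sgl x := Subtype.ext hx
    rw [this]
    exact absconn_sgl x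

end Helpers

/-- For a chainmail `Γ`, the exterior `D(Γ)` is an absolute connectivity lattice
whose absolutely connected elements are exactly the singletons `{x}` for `x ∈ Γ`;
consequently, the poset of absolutely connected elements of `D(Γ)` is isomorphic
to `Γ`. -/
theorem exterior_absolute_connectivity [PartialOrder α]
    (hΓ : ∀ M : Set α, M.Nonempty → (∃ b, ∀ m ∈ M, b ≤ m) → ∃ j, IsLUB M j) :
    (∀ a : DExt α, AbsConnE a ↔ ∃ x : α, a.1 = {x}) ∧
    (∀ a : DExt α, ∃ 𝒮 : Set (DExt α), 𝒮 ⊆ {b | AbsConnE b} ∧ IsLUB 𝒮 a) ∧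
    (∀ X : Set (DExt α), X ⊆ {b | AbsConnE b} →
      (∀ a ∈ X, ∀ b ∈ X, a ≠ b → ¬∃ c : DExt α, AbsConnE c ∧ c ≤ a ∧ c ≤ b) →
      ∀ j : DExt α, IsLUB X j → X = CompsE j) ∧
    Nonempty (α ≃o {a : DExt α // AbsConnE a}) := by
  refine ⟨absconn_iff, ?_, ?_, ?_⟩
  · intro a
    refine ⟨{s | ∃ x ∈ a.1, s = sgl x}, ?_, isLUB_sgls a⟩
    rintro s ⟨x, hx, rfl⟩
    exact absconn_sgl x
  · intro X hX hpair j hj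
    have hT := union_tmd' X AbsConnE (fun c => absconn_sgl c) hpair
    have hje : j = ⟨_, hT⟩ := hj.unique (isLUB_union X hT)
    set Y : Set α := ⋃ s ∈ X, (s : DExt α).1 with hY
    -- every element of Y gives a member of X that is its singleton
    have hmem : ∀ y ∈ Y, sgl y ∈ X := by
      intro y hy
      simp only [hY, Set.mem_iUnion, exists_prop] at hy
      obtain ⟨s, hs, hys⟩ := hy
      obtain ⟨z, hz⟩ := (absconn_iff s).mp (hX hs)
      rw [hz, Set.mem_singleton_iff] at hys
      have : s = sgl y := Subtype.ext (by rw [hz, hys]; rfl)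
      exact this ▸ hs
    have hYtmd : TMD Y := hT
    apply subset_antisymm
    · intro a haX
      obtain ⟨x, hx⟩ := (absconn_iff a).mp (hX haX)
      have hax : a = sgl x := Subtype.ext hx
      have hxY : x ∈ Y := by
        simp only [hY, Set.mem_iUnion, exists_prop]
        exact ⟨a, haX, hx ▸ rfl⟩
      refine ⟨hX haX, hj.1 haX, ?_⟩
      intro d hd hdj had
      obtain ⟨z, hz⟩ := (absconn_iff d).mp hd
      have hdz : d = sgl z := Subtype.ext hz
      rw [hax, hdz] at had
      obtain ⟨b, hb, hxz⟩ := sgl_le_iff.mp had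
      have hb' : b = z := hb
      subst hb'
      rw [hje, hdz] at hdj
      obtain ⟨w, hw, hzw⟩ := sgl_le_iff.mp hdj
      have hxw : x = w := by
        by_contra hne
        exact hYtmd x hxY w hw hne ⟨x, le_refl x, le_trans hxz hzw⟩
      have : b = x := le_antisymm (hxw ▸ hzw) hxz
      rw [hax, hdz, this]
    · rintro c ⟨hc, hcj, hmax⟩
      obtain ⟨x, hx⟩ := (absconn_iff c).mp hc
      have hcx : c = sgl x := Subtype.ext hx
      rw [hje, hcx] at hcj
      obtain ⟨y, hy, hxy⟩ := sgl_le_iff.mp hcj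
      have hsy : sgl y ∈ X := hmem y hy
      have hcy : c = sgl y := by
        apply hmax (sgl y) (absconn_sgl y) (hj.1 hsy)
        rw [hcx]
        exact sgl_le_iff.mpr ⟨y, rfl, hxy⟩
      exact hcy ▸ hsy
  · refine ⟨{
      toFun := fun x => ⟨sgl x, absconn_sgl x⟩
      invFun := fun a => ((absconn_iff a.1).mp a.2).choose
      left_inv := ?_
      right_inv := ?_
      map_rel_iff' := ?_ }⟩
    · intro x
      have hspec := ((absconn_iff (sgl x)).mp (absconn_sgl x)).choose_spec
      exact (Set.singleton_eq_singleton_iff.mp hspec).symm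
    · intro a
      have hspec := ((absconn_iff a.1).mp a.2).choose_spec
      exact Subtype.ext (Subtype.ext hspec.symm)
    · intro x y
      constructor
      · intro h
        obtain ⟨b, hb, hxb⟩ := sgl_le_iff.mp h
        have hb' : b = y := hb
        exact hb' ▸ hxb
      · intro h
        exact sgl_le_iff.mpr ⟨y, rfl, h⟩
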